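/- Over the alphabet A = {a,b} (a ≠ b), the set {(aˢbaˢ, aˢbaˢ, aˢba^{2s}baˢ) : s > 0} ⊆ U is not the behavior of any spliffer with finitely many states (in particular, it is not the behavior of any deterministic splitter). -/
import Mathlib


/-- Words over the alphabet `A`, i.e. elements of the free monoid `A*`. -/
abbrev Word (A : Type) := List A

/-- The generating set `G = {(a,ε,a) : a ∈ A} ∪ {(ε,a,a) : a ∈ A}` of the
Shuffling Monoid. -/
def genG (A : Type) : Set (Word A × Word A × Word A) :=
  {g | ∃ a : A, g = ([a], [], [a]) ∨ g = ([], [a], [a])}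

/-- Componentwise product (concatenation) of a list of triples of words. -/
def prodTriple {A : Type} (ls : List (Word A × Word A × Word A)) :
    Word A × Word A × Word A :=
  ((ls.map fun l => l.1).flatten, (ls.map fun l => l.2.1).flatten,
    (ls.map fun l => l.2.2).flatten)

/-- The Shuffling Monoid `U`: the submonoid of `A* × A* × A*` generated by `G`,
described as the set of all products of finite sequences of generators. -/
def shuffleU (A : Type) : Set (Word A × Word A × Word A) :=
  {m | ∃ ls : List (Word A × Word A × Word A), (∀ l ∈ ls, l ∈ genG A) ∧ prodTriple ls = m}

/-- A spliffer (equivalently, splitter) over `A`: a finite automaton whose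
transitions are labeled by elements of `G`. -/
structure Spliffer (A : Type) where
  Q : Type
  finQ : Finite Q
  E : Q → (Word A × Word A × Word A) → Q → Prop
  I : Set Q
  T : Set Q
  labels_mem : ∀ {q l q'}, E q l q' → l ∈ genG A

/-- Paths in a spliffer, recording the sequence of labels. -/
inductive Spliffer.Path {A : Type} (S : Spliffer A) :
    S.Q → List (Word A × Word A × Word A) → S.Q → Prop
  | nil (q : S.Q) : Spliffer.Path S q [] q
  | cons {q q' q'' : S.Q} {l : Word A × Word A × Word A}
      {ls : List (Word A × Word A × Word A)} :
      S.E q l q' → Spliffer.Path S q' ls q'' → Spliffer.Path S q (l :: ls) q''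

/-- The behavior `|S|` of a spliffer: products of the label sequences of all
successful runs. -/
def Spliffer.behavior {A : Type} (S : Spliffer A) : Set (Word A × Word A × Word A) :=
  {m | ∃ q ∈ S.I, ∃ q' ∈ S.T, ∃ ls, S.Path q ls q' ∧ prodTriple ls = m}

/-- A splitter is deterministic if it has a single initial state, for every state
and input letter there is at most one outgoing transition reading that letter,
and all transitions leaving a given state write to the same tape. -/
def Spliffer.Deterministic {A : Type} (S : Spliffer A) : Prop :=
  (∃! i, i ∈ S.I) ∧
  (∀ ⦃q l₁ q₁ l₂ q₂⦄, S.E q l₁ q₁ → S.E q l₂ q₂ → l₁.2.2 = l₂.2.2 → l₁ = l₂ ∧ q₁ = q₂) ∧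
  (∀ ⦃q l₁ q₁ l₂ q₂⦄, S.E q l₁ q₁ → S.E q l₂ q₂ →
    (l₁.1 = [] ∧ l₂.1 = []) ∨ (l₁.2.1 = [] ∧ l₂.2.1 = []))

/-- The set `L₁ = {(aⁿbaᵐ, aᵐbaˢ, aⁿba^{2m}baˢ) : n,m,s > 0}`. -/
def setL1 {A : Type} (a b : A) : Set (Word A × Word A × Word A) :=
  {x | ∃ n m s : ℕ, 0 < n ∧ 0 < m ∧ 0 < s ∧
    x = (List.replicate n a ++ [b] ++ List.replicate m a,
         List.replicate m a ++ [b] ++ List.replicate s a,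
         List.replicate n a ++ [b] ++ List.replicate (2 * m) a ++ [b] ++
           List.replicate s a)}

/-- The set `L₂ = {(aⁱbaʲ, aᵏbaⁱ, aᵏba^{2i}baʲ) : i,j,k > 0}`. -/
def setL2 {A : Type} (a b : A) : Set (Word A × Word A × Word A) :=
  {x | ∃ i j k : ℕ, 0 < i ∧ 0 < j ∧ 0 < k ∧
    x = (List.replicate i a ++ [b] ++ List.replicate j a,
         List.replicate k a ++ [b] ++ List.replicate i a,
         List.replicate k a ++ [b] ++ List.replicate (2 * i) a ++ [b] ++
           List.replicate j a)}

/-- The set `{(aˢbaˢ, aˢbaˢ, aˢba^{2s}baˢ) : s > 0}`. -/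
def setLcap {A : Type} (a b : A) : Set (Word A × Word A × Word A) :=
  {x | ∃ s : ℕ, 0 < s ∧
    x = (List.replicate s a ++ [b] ++ List.replicate s a,
         List.replicate s a ++ [b] ++ List.replicate s a,
         List.replicate s a ++ [b] ++ List.replicate (2 * s) a ++ [b] ++
           List.replicate s a)}

section Aux

variable {A : Type}

lemma prodTriple_nil' : prodTriple ([] : List (Word A × Word A × Word A)) = ([], [], []) := rfl

lemma prodTriple_cons' (l : Word A × Word A × Word A) (m : List (Word A × Word A × Word A)) :
    prodTriple (l :: m) = (l.1 ++ (prodTriple m).1, l.2.1 ++ (prodTriple m).2.1,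
      l.2.2 ++ (prodTriple m).2.2) := by
  simp [prodTriple]

lemma prodTriple_append' (u v : List (Word A × Word A × Word A)) :
    prodTriple (u ++ v) = ((prodTriple u).1 ++ (prodTriple v).1,
      (prodTriple u).2.1 ++ (prodTriple v).2.1, (prodTriple u).2.2 ++ (prodTriple v).2.2) := by
  simp [prodTriple]

lemma path_mem_genG {S : Spliffer A} {q q' : S.Q} {ls} (h : S.Path q ls q') :
    ∀ l ∈ ls, l ∈ genG A := by
  induction h with
  | nil => simp
  | cons e _ ih =>
    intro l hl
    rcases List.mem_cons.1 hl with rfl | hl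
    · exact S.labels_mem e
    · exact ih l hl

lemma path_append {S : Spliffer A} {q r q' : S.Q} {u v} (h1 : S.Path q u r)
    (h2 : S.Path r v q') : S.Path q (u ++ v) q' := by
  induction h1 with
  | nil => simpa using h2
  | cons e _ ih => exact Spliffer.Path.cons e (ih h2)

lemma exists_runFun {S : Spliffer A} {q q' : S.Q} {ls} (h : S.Path q ls q') :
    ∃ f : ℕ → S.Q, f 0 = q ∧ f ls.length = q' ∧
      ∀ k (hk : k < ls.length), S.E (f k) (ls.get ⟨k, hk⟩) (f (k + 1)) := by
  induction h with
  | nil q => exact ⟨fun _ => q, rfl, rfl, by simp⟩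
  | @cons q q' q'' l ls e p ih =>
    obtain ⟨f, h0, hl, he⟩ := ih
    refine ⟨fun k => if k = 0 then q else f (k - 1), by simp, by simp [hl], ?_⟩
    intro k hk
    match k with
    | 0 => simpa [h0] using e
    | (k + 1) =>
      have hk' : k < ls.length := by simpa using hk
      simpa using he k hk'

lemma path_segment {S : Spliffer A} {ls : List (Word A × Word A × Word A)} (f : ℕ → S.Q)
    (he : ∀ k (hk : k < ls.length), S.E (f k) (ls.get ⟨k, hk⟩) (f (k + 1))) :
    ∀ d i, i + d ≤ ls.length → S.Path (f i) ((ls.drop i).take d) (f (i + d)) := by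
  intro d
  induction d with
  | zero => intro i _; simpa using Spliffer.Path.nil _
  | succ d ih =>
    intro i hi
    have hlt : i < ls.length := by omega
    have hdrop : ls.drop i = ls.get ⟨i, hlt⟩ :: ls.drop (i + 1) := by
      rw [List.drop_eq_getElem_cons hlt]; rfl
    rw [hdrop, List.take_succ_cons, show i + (d + 1) = (i + 1) + d by omega]
    exact Spliffer.Path.cons (he i hlt) (ih (i + 1) (by omega))

lemma rep_b_cancel {a b : A} (hab : a ≠ b) :
    ∀ (n m : ℕ) (u v : Word A),
      List.replicate n a ++ b :: u = List.replicate m a ++ b :: v → n = m ∧ u = v := by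
  intro n
  induction n with
  | zero =>
    intro m u v h
    cases m with
    | zero => simpa using h
    | succ m =>
      rw [List.replicate_succ] at h
      simp only [List.replicate_zero, List.nil_append, List.cons_append, List.cons.injEq] at h
      exact absurd h.1 (Ne.symm hab)
  | succ n ih =>
    intro m u v h
    cases m with
    | zero =>
      rw [List.replicate_succ] at h
      simp only [List.replicate_zero, List.nil_append, List.cons_append, List.cons.injEq] at h
      exact absurd h.1 hab
    | succ m =>
      rw [List.replicate_succ, List.replicate_succ] at h
      simp only [List.cons_append, List.cons.injEq] at h
      obtain ⟨hn, hu⟩ := ih m u v h.2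
      exact ⟨by omega, hu⟩

lemma tape3_length {ls : List (Word A × Word A × Word A)} (h : ∀ l ∈ ls, l ∈ genG A) :
    (prodTriple ls).2.2.length = ls.length := by
  induction ls with
  | nil => rfl
  | cons l m ih =>
    obtain ⟨x, hx | hx⟩ := h l (List.mem_cons_self ..)
    all_goals
      rw [prodTriple_cons']
      simp [hx, ih (fun l hl => h l (List.mem_cons_of_mem _ hl))]

lemma allA {a : A} : ∀ (m : List (Word A × Word A × Word A)) (k : ℕ),
    (∀ l ∈ m, l ∈ genG A) → (prodTriple m).2.2 = List.replicate k a →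
    ∃ p q : ℕ, p + q = k ∧ prodTriple m =
      (List.replicate p a, List.replicate q a, List.replicate k a) := by
  intro m
  induction m with
  | nil =>
    intro k _ h3
    have hk : k = 0 := by
      have := congrArg List.length h3
      simpa [prodTriple] using this.symm
    exact ⟨0, 0, by simp [hk], by simp [prodTriple, hk]⟩
  | cons l m ih =>
    intro k hg h3
    rw [prodTriple_cons'] at h3
    obtain ⟨x, hx | hx⟩ := hg l (List.mem_cons_self ..)
    · rw [hx] at h3
      simp only [List.cons_append, List.nil_append, List.singleton_append] at h3
      cases k with
      | zero => simp at h3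
      | succ k =>
        rw [List.replicate_succ] at h3
        simp only [List.cons.injEq] at h3
        obtain ⟨rfl, h3'⟩ := h3
        obtain ⟨p, q, hpq, hm⟩ := ih k (fun l hl => hg l (List.mem_cons_of_mem _ hl)) h3'
        exact ⟨p + 1, q, by omega, by
          rw [prodTriple_cons', hx, hm]
          simp [List.replicate_succ]⟩
    · rw [hx] at h3
      simp only [List.cons_append, List.nil_append, List.singleton_append] at h3
      cases k with
      | zero => simp at h3
      | succ k =>
        rw [List.replicate_succ] at h3
        simp only [List.cons.injEq] at h3
        obtain ⟨rfl, h3'⟩ := h3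
        obtain ⟨p, q, hpq, hm⟩ := ih k (fun l hl => hg l (List.mem_cons_of_mem _ hl)) h3'
        exact ⟨p, q + 1, by omega, by
          rw [prodTriple_cons', hx, hm]
          simp [List.replicate_succ]⟩

lemma drop_rep {a b : A} {c s : ℕ} (h : c ≤ s) {X Y : Word A}
    (heq : List.replicate c a ++ X = List.replicate s a ++ b :: Y) :
    X = List.replicate (s - c) a ++ b :: Y := by
  have hr : List.replicate s a = List.replicate c a ++ List.replicate (s - c) a := by
    rw [← List.replicate_add]; congr 1; omega
  rw [hr, List.append_assoc] at heq
  exact List.append_cancel_left heq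

lemma comp_cancel {a b : A} (hab : a ≠ b) {s t p1 p2 : ℕ} {X : Word A}
    (hle : p1 + p2 ≤ s)
    (horig : List.replicate p1 a ++ (List.replicate p2 a ++ X)
      = List.replicate s a ++ b :: List.replicate s a)
    (hpump : List.replicate p1 a ++ X = List.replicate t a ++ b :: List.replicate t a) :
    p2 = 0 := by
  have h1 : List.replicate (p1 + p2) a ++ X
      = List.replicate s a ++ b :: List.replicate s a := by
    rw [List.replicate_add, List.append_assoc]; exact horig
  have hX := drop_rep hle h1
  rw [hX, ← List.append_assoc, ← List.replicate_add] at hpump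
  obtain ⟨h1', h2'⟩ := rep_b_cancel hab _ _ _ _ hpump
  have hst : s = t := by
    have := congrArg List.length h2'
    simpa using this
  omega

end Aux

/-- over `A = {a,b}`, the set `{(aˢbaˢ, aˢbaˢ, aˢba^{2s}baˢ) : s > 0}`
is not the behavior of any spliffer with finitely many states. -/
theorem Lcap_not_a_spliffer_behavior {A : Type} (a b : A) (hab : a ≠ b)
    (hA : ∀ x : A, x = a ∨ x = b) :
    ¬ ∃ S : Spliffer A, S.behavior = setLcap a b := by
  rintro ⟨S, hbeh⟩
  haveI := S.finQ
  haveI := Fintype.ofFinite S.Q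
  set s : ℕ := Fintype.card S.Q + 1 with hs
  have hspos : 0 < s := Nat.succ_pos _
  have hw : (List.replicate s a ++ [b] ++ List.replicate s a,
      List.replicate s a ++ [b] ++ List.replicate s a,
      List.replicate s a ++ [b] ++ List.replicate (2 * s) a ++ [b] ++ List.replicate s a)
      ∈ S.behavior := by
    rw [hbeh]; exact ⟨s, hspos, rfl⟩
  obtain ⟨q0, hI, qf, hT, ls, hpath, hprod⟩ := hw
  have hgen : ∀ l ∈ ls, l ∈ genG A := path_mem_genG hpath
  have hlen : ls.length = 4 * s + 2 := by
    have h := tape3_length hgen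
    rw [hprod] at h
    simp at h
    omega
  obtain ⟨f, hf0, hfl, hfe⟩ := exists_runFun hpath
  have key : ∀ i j : ℕ, i < j → j ≤ s → f i = f j → False := by
    intro i j hij hjs hfij
    have hjlen : j ≤ ls.length := by omega
    -- paths for the three segments
    have hP1 : S.Path q0 (ls.take i) (f i) := by
      have h := path_segment f hfe i 0 (by omega)
      simpa [hf0] using h
    have hP2 : S.Path (f i) ((ls.drop i).take (j - i)) (f j) := by
      have h := path_segment f hfe (j - i) i (by omega)
      rwa [show i + (j - i) = j by omega] at h
    have hP3 : S.Path (f j) (ls.drop j) qf := by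
      have h := path_segment f hfe (ls.length - j) j (by omega)
      rwa [show j + (ls.length - j) = ls.length by omega, hfl,
        List.take_of_length_le (by simp)] at h
    -- the pumped-down word is in the behavior, hence in setLcap
    have hPnew : S.Path q0 (ls.take i ++ ls.drop j) qf :=
      path_append hP1 (hfij ▸ hP3)
    have hw' : prodTriple (ls.take i ++ ls.drop j) ∈ setLcap a b := by
      rw [← hbeh]; exact ⟨q0, hI, qf, hT, _, hPnew, rfl⟩
    obtain ⟨t, ht, hteq⟩ := hw'
    -- decompose ls = take i ++ mid ++ drop j
    have hT12 : ls.take i ++ (ls.drop i).take (j - i) = ls.take j := by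
      rw [← List.take_add]; congr 1; omega
    have hls : ls.take i ++ ((ls.drop i).take (j - i) ++ ls.drop j) = ls := by
      rw [← List.append_assoc, hT12, List.take_append_drop]
    have hgenT1 : ∀ l ∈ ls.take i, l ∈ genG A :=
      fun l hl => hgen l (List.mem_of_mem_take hl)
    have hgenT2 : ∀ l ∈ (ls.drop i).take (j - i), l ∈ genG A :=
      fun l hl => hgen l (List.mem_of_mem_drop (List.mem_of_mem_take hl))
    have hgenTj : ∀ l ∈ ls.take j, l ∈ genG A :=
      fun l hl => hgen l (List.mem_of_mem_take hl)
    -- tape 3 of take j is a^j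
    have h3ls : (prodTriple ls).2.2 = List.replicate s a ++
        b :: (List.replicate (2 * s) a ++ b :: List.replicate s a) := by
      rw [hprod]; simp
    have hsplit3 : (prodTriple (ls.take j)).2.2 ++ (prodTriple (ls.drop j)).2.2
        = (prodTriple ls).2.2 := by
      conv_rhs => rw [← List.take_append_drop j ls]
      rw [prodTriple_append']
    have hlenTj : (prodTriple (ls.take j)).2.2.length = j := by
      rw [tape3_length hgenTj]
      simp [hlen]; omega
    have h3Tj : (prodTriple (ls.take j)).2.2 = List.replicate j a := by
      have hr : List.replicate s a = List.replicate j a ++ List.replicate (s - j) a := by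
        rw [← List.replicate_add]; congr 1; omega
      have heq : (prodTriple (ls.take j)).2.2 ++ (prodTriple (ls.drop j)).2.2
          = List.replicate j a ++ (List.replicate (s - j) a ++
            b :: (List.replicate (2 * s) a ++ b :: List.replicate s a)) := by
        rw [hsplit3, h3ls, hr, List.append_assoc]
      exact (List.append_inj heq (by rw [hlenTj]; simp)).1
    -- split tape 3 of take j into the two segments
    have hsplit12 : (prodTriple (ls.take i)).2.2 ++ (prodTriple ((ls.drop i).take (j - i))).2.2
        = List.replicate j a := by
      rw [← h3Tj, ← hT12, prodTriple_append']
    have hlenT1 : (prodTriple (ls.take i)).2.2.length = i := by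
      rw [tape3_length hgenT1]
      simp [hlen]; omega
    have hrj : List.replicate j a = List.replicate i a ++ List.replicate (j - i) a := by
      rw [← List.replicate_add]; congr 1; omega
    have h3T1 : (prodTriple (ls.take i)).2.2 = List.replicate i a :=
      (List.append_inj (hsplit12.trans hrj) (by rw [hlenT1]; simp)).1
    have h3T2 : (prodTriple ((ls.drop i).take (j - i))).2.2 = List.replicate (j - i) a :=
      (List.append_inj (hsplit12.trans hrj) (by rw [hlenT1]; simp)).2
    obtain ⟨p1, q1, hpq1, hPT1⟩ := allA (ls.take i) i hgenT1 h3T1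
    obtain ⟨p2, q2, hpq2, hPT2⟩ := allA ((ls.drop i).take (j - i)) (j - i) hgenT2 h3T2
    -- component equations for the original word
    have e1 : (prodTriple ls).1 = (prodTriple (ls.take i)).1 ++
        ((prodTriple ((ls.drop i).take (j - i))).1 ++ (prodTriple (ls.drop j)).1) := by
      conv_lhs => rw [← hls]
      rw [prodTriple_append', prodTriple_append']
    have e2 : (prodTriple ls).2.1 = (prodTriple (ls.take i)).2.1 ++
        ((prodTriple ((ls.drop i).take (j - i))).2.1 ++ (prodTriple (ls.drop j)).2.1) := by
      conv_lhs => rw [← hls]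
      rw [prodTriple_append', prodTriple_append']
    rw [hprod, hPT1, hPT2] at e1 e2
    simp only at e1 e2
    -- component equations for the pumped word
    have p1e : (prodTriple (ls.take i ++ ls.drop j)).1
        = List.replicate p1 a ++ (prodTriple (ls.drop j)).1 := by
      rw [prodTriple_append', hPT1]
    have p2e : (prodTriple (ls.take i ++ ls.drop j)).2.1
        = List.replicate q1 a ++ (prodTriple (ls.drop j)).2.1 := by
      rw [prodTriple_append', hPT1]
    rw [hteq] at p1e p2e
    simp only at p1e p2e
    -- now apply the cancellation lemma on tapes 1 and 2
    have horig1 : List.replicate p1 a ++ (List.replicate p2 a ++ (prodTriple (ls.drop j)).1)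
        = List.replicate s a ++ b :: List.replicate s a := by
      rw [← e1]; simp
    have horig2 : List.replicate q1 a ++ (List.replicate q2 a ++ (prodTriple (ls.drop j)).2.1)
        = List.replicate s a ++ b :: List.replicate s a := by
      rw [← e2]; simp
    have hpump1 : List.replicate p1 a ++ (prodTriple (ls.drop j)).1
        = List.replicate t a ++ b :: List.replicate t a := by
      rw [← p1e]; simp
    have hpump2 : List.replicate q1 a ++ (prodTriple (ls.drop j)).2.1
        = List.replicate t a ++ b :: List.replicate t a := by
      rw [← p2e]; simp
    have hp2 : p2 = 0 := comp_cancel hab (by omega) horig1 hpump1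
    have hq2 : q2 = 0 := comp_cancel hab (by omega) horig2 hpump2
    omega
  -- pigeonhole on the first s + 1 states of the run
  have hcard : Fintype.card S.Q < Fintype.card (Fin (s + 1)) := by
    simp only [Fintype.card_fin, hs]; omega
  obtain ⟨x, y, hxy, hfxy⟩ :=
    Fintype.exists_ne_map_eq_of_card_lt (fun i : Fin (s + 1) => f i) hcard
  rcases hxy.lt_or_gt with h | h
  · exact key x y h (Nat.lt_succ_iff.mp y.isLt) hfxy
  · exact key y x h (Nat.lt_succ_iff.mp x.isLt) hfxy.symm
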